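/- Let (B,Δ,ε,1,μ) be a nonassociative C³I-bialgebra over K which is left-unital, i.e. μ(1⊗a) = a for all a ∈ B, and whose underlying C³-coalgebra is connected. Then B is left-regular: there exists a K-linear map μ′ : B⊗B → B with Σ μ(a⁽¹⁾⊗μ′(a⁽²⁾⊗b)) = ε(a)b = Σ μ′(a⁽¹⁾⊗μ(a⁽²⁾⊗b)) for all a,b ∈ B. -/

import Mathlib

open TensorProduct

namespace RackPaper

variable (K : Type*) [CommRing K]
variable (B : Type*) [AddCommGroup B] [Module K B]

/-- Comultiplication of the tensor-product coalgebra `B ⊗ B`. -/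
noncomputable def comul2 (comul : B →ₗ[K] B ⊗[K] B) :
    B ⊗[K] B →ₗ[K] (B ⊗[K] B) ⊗[K] (B ⊗[K] B) :=
  (tensorTensorTensorComm K B B B B).toLinearMap ∘ₗ TensorProduct.map comul comul

/-- Counit of the tensor-product coalgebra `B ⊗ B`. -/
noncomputable def counit2 (counit : B →ₗ[K] K) : B ⊗[K] B →ₗ[K] K :=
  (LinearMap.mul' K K) ∘ₗ TensorProduct.map counit counit

/-- `(B, comul, counit, one)` is a coassociative counital coaugmented coalgebra. -/
structure IsC3Coalgebra (comul : B →ₗ[K] B ⊗[K] B) (counit : B →ₗ[K] K) (one : B) : Prop where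
  coassoc : (TensorProduct.assoc K B B B).toLinearMap ∘ₗ
      (TensorProduct.map comul LinearMap.id) ∘ₗ comul
      = (TensorProduct.map LinearMap.id comul) ∘ₗ comul
  counit_comul : (TensorProduct.lid K B).toLinearMap ∘ₗ
      (TensorProduct.map counit LinearMap.id) ∘ₗ comul = LinearMap.id
  comul_counit : (TensorProduct.rid K B).toLinearMap ∘ₗ
      (TensorProduct.map LinearMap.id counit) ∘ₗ comul = LinearMap.id
  comul_one : comul one = one ⊗ₜ[K] one
  counit_one : counit one = 1

/-- A nonassociative C³I-bialgebra: a C³-coalgebra with a multiplication which is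
a morphism of C³-coalgebras. -/
structure IsC3IBialgebra (comul : B →ₗ[K] B ⊗[K] B) (counit : B →ₗ[K] K) (one : B)
    (mul : B ⊗[K] B →ₗ[K] B) : Prop where
  isC3 : IsC3Coalgebra K B comul counit one
  comul_mul : comul ∘ₗ mul = (TensorProduct.map mul mul) ∘ₗ comul2 K B comul
  counit_mul : counit ∘ₗ mul = counit2 K B counit
  mul_one_one : mul (one ⊗ₜ[K] one) = one

/-- `μ'` witnesses the left-regularity of `(B, Δ, ε, 1, μ)`:
`Σ μ(a⁽¹⁾ ⊗ μ'(a⁽²⁾ ⊗ b)) = ε(a) b = Σ μ'(a⁽¹⁾ ⊗ μ(a⁽²⁾ ⊗ b))`. -/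
def LeftRegularWitness (comul : B →ₗ[K] B ⊗[K] B) (counit : B →ₗ[K] K)
    (mul mul' : B ⊗[K] B →ₗ[K] B) : Prop :=
  (mul ∘ₗ TensorProduct.map LinearMap.id mul' ∘ₗ (TensorProduct.assoc K B B B).toLinearMap ∘ₗ
      TensorProduct.map comul LinearMap.id
    = (TensorProduct.lid K B).toLinearMap ∘ₗ TensorProduct.map counit LinearMap.id) ∧
  (mul' ∘ₗ TensorProduct.map LinearMap.id mul ∘ₗ (TensorProduct.assoc K B B B).toLinearMap ∘ₗ
      TensorProduct.map comul LinearMap.id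
    = (TensorProduct.lid K B).toLinearMap ∘ₗ TensorProduct.map counit LinearMap.id)

/-- The linear map `x ↦ Δ(x) - x ⊗ 1 - 1 ⊗ x`. -/
noncomputable def deltaPrime (comul : B →ₗ[K] B ⊗[K] B) (one : B) : B →ₗ[K] B ⊗[K] B :=
  comul - ((TensorProduct.mk K B B).flip one) - (TensorProduct.mk K B B one)

/-- The subcoalgebra of order `k`:  `B₍₀₎ = K·1` and
`B₍ₖ₊₁₎ = {x | Δ(x) - x ⊗ 1 - 1 ⊗ x ∈ B₍ₖ₎ ⊗ B₍ₖ₎}`. -/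
noncomputable def ordSub (comul : B →ₗ[K] B ⊗[K] B) (one : B) : ℕ → Submodule K B
  | 0 => Submodule.span K {one}
  | k + 1 => Submodule.comap (deltaPrime K B comul one)
      (LinearMap.range (TensorProduct.mapIncl (ordSub comul one k) (ordSub comul one k)))

section Aux

variable {K B}
variable (comul : B →ₗ[K] B ⊗[K] B) (counit : B →ₗ[K] K) (one : B) (mul : B ⊗[K] B →ₗ[K] B)

/-- Convolution product on `Hom(B, End B)`. -/
noncomputable def conv (φ ψ : B →ₗ[K] Module.End K B) : B →ₗ[K] Module.End K B :=
  (LinearMap.mul' K (Module.End K B)) ∘ₗ TensorProduct.map φ ψ ∘ₗ comul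

/-- Convolution unit. -/
noncomputable def convUnit : B →ₗ[K] Module.End K B :=
  counit.smulRight LinearMap.id

lemma conv_apply (φ ψ : B →ₗ[K] Module.End K B) (a : B) :
    conv comul φ ψ a = LinearMap.mul' K (Module.End K B) (TensorProduct.map φ ψ (comul a)) := rfl

lemma conv_add_left (φ φ' ψ : B →ₗ[K] Module.End K B) :
    conv comul (φ + φ') ψ = conv comul φ ψ + conv comul φ' ψ := by
  unfold conv; rw [TensorProduct.map_add_left]; ext a : 1; simp

lemma conv_add_right (φ ψ ψ' : B →ₗ[K] Module.End K B) :
    conv comul φ (ψ + ψ') = conv comul φ ψ + conv comul φ ψ' := by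
  unfold conv; rw [TensorProduct.map_add_right]; ext a : 1; simp

lemma conv_smul_right (c : K) (φ ψ : B →ₗ[K] Module.End K B) :
    conv comul φ (c • ψ) = c • conv comul φ ψ := by
  unfold conv; rw [TensorProduct.map_smul_right]; ext a : 1; simp

lemma conv_smul_left (c : K) (φ ψ : B →ₗ[K] Module.End K B) :
    conv comul (c • φ) ψ = c • conv comul φ ψ := by
  unfold conv; rw [TensorProduct.map_smul_left]; ext a : 1; simp

lemma conv_sum_right {ι : Type*} (s : Finset ι) (φ : B →ₗ[K] Module.End K B)
    (ψ : ι → (B →ₗ[K] Module.End K B)) :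
    conv comul φ (∑ i ∈ s, ψ i) = ∑ i ∈ s, conv comul φ (ψ i) := by
  classical
  induction s using Finset.induction_on with
  | empty => simp [conv]
  | insert _ _ h ih => rw [Finset.sum_insert h, Finset.sum_insert h, conv_add_right, ih]

lemma conv_sum_left {ι : Type*} (s : Finset ι) (φ : ι → (B →ₗ[K] Module.End K B))
    (ψ : B →ₗ[K] Module.End K B) :
    conv comul (∑ i ∈ s, φ i) ψ = ∑ i ∈ s, conv comul (φ i) ψ := by
  classical
  induction s using Finset.induction_on with
  | empty => simp [conv]
  | insert _ _ h ih => rw [Finset.sum_insert h, Finset.sum_insert h, conv_add_left, ih]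

lemma conv_unit_left
    (hcu : (TensorProduct.lid K B).toLinearMap ∘ₗ
      (TensorProduct.map counit LinearMap.id) ∘ₗ comul = LinearMap.id)
    (ψ : B →ₗ[K] Module.End K B) :
    conv comul (convUnit counit) ψ = ψ := by
  ext a : 1
  have h1 : ∀ t : B ⊗[K] B,
      LinearMap.mul' K (Module.End K B) (TensorProduct.map (convUnit counit) ψ t)
      = ψ ((TensorProduct.lid K B) (TensorProduct.map counit LinearMap.id t)) := by
    intro t
    induction t using TensorProduct.induction_on with
    | zero => simp
    | tmul x y =>
        simp [convUnit, LinearMap.mul'_apply, smul_mul_assoc, Module.End.mul_eq_comp]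
    | add s t hs ht => simp only [map_add, hs, ht]
  rw [conv_apply, h1]
  have h2 := LinearMap.congr_fun hcu a
  simp only [LinearMap.coe_comp, Function.comp_apply, LinearEquiv.coe_coe,
    LinearMap.id_coe, id_eq] at h2
  rw [h2]

lemma conv_unit_right
    (hcu : (TensorProduct.rid K B).toLinearMap ∘ₗ
      (TensorProduct.map LinearMap.id counit) ∘ₗ comul = LinearMap.id)
    (φ : B →ₗ[K] Module.End K B) :
    conv comul φ (convUnit counit) = φ := by
  ext a : 1
  have h1 : ∀ t : B ⊗[K] B,
      LinearMap.mul' K (Module.End K B) (TensorProduct.map φ (convUnit counit) t)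
      = φ ((TensorProduct.rid K B) (TensorProduct.map LinearMap.id counit t)) := by
    intro t
    induction t using TensorProduct.induction_on with
    | zero => simp
    | tmul x y =>
        simp [convUnit, LinearMap.mul'_apply, mul_smul_comm, Module.End.mul_eq_comp]
    | add s t hs ht => simp only [map_add, hs, ht]
  rw [conv_apply, h1]
  have h2 := LinearMap.congr_fun hcu a
  simp only [LinearMap.coe_comp, Function.comp_apply, LinearEquiv.coe_coe,
    LinearMap.id_coe, id_eq] at h2
  rw [h2]

lemma conv_assoc
    (hco : (TensorProduct.assoc K B B B).toLinearMap ∘ₗ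
      (TensorProduct.map comul LinearMap.id) ∘ₗ comul
      = (TensorProduct.map LinearMap.id comul) ∘ₗ comul)
    (φ ψ χ : B →ₗ[K] Module.End K B) :
    conv comul (conv comul φ ψ) χ = conv comul φ (conv comul ψ χ) := by
  set E := Module.End K B
  set m := LinearMap.mul' K E with hm
  have e1 : TensorProduct.map (conv comul φ ψ) χ
      = (TensorProduct.map m LinearMap.id) ∘ₗ
        (TensorProduct.map (TensorProduct.map φ ψ) χ) ∘ₗ
        (TensorProduct.map comul LinearMap.id) := by
    rw [← TensorProduct.map_comp, ← TensorProduct.map_comp]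
    rfl
  have e2 : TensorProduct.map φ (conv comul ψ χ)
      = (TensorProduct.map LinearMap.id m) ∘ₗ
        (TensorProduct.map φ (TensorProduct.map ψ χ)) ∘ₗ
        (TensorProduct.map LinearMap.id comul) := by
    rw [← TensorProduct.map_comp, ← TensorProduct.map_comp]
    rfl
  have assocE : ∀ t : (E ⊗[K] E) ⊗[K] E,
      m (TensorProduct.map m LinearMap.id t)
      = m (TensorProduct.map LinearMap.id m ((TensorProduct.assoc K E E E) t)) := by
    intro t
    have h : m ∘ₗ (TensorProduct.map m LinearMap.id)
        = (m ∘ₗ (TensorProduct.map LinearMap.id m)) ∘ₗ (TensorProduct.assoc K E E E).toLinearMap := by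
      apply TensorProduct.ext_threefold
      intro x y z
      simp [hm, LinearMap.mul'_apply, mul_assoc]
    exact LinearMap.congr_fun h t
  have nat : ∀ t : (B ⊗[K] B) ⊗[K] B,
      (TensorProduct.assoc K E E E) (TensorProduct.map (TensorProduct.map φ ψ) χ t)
      = TensorProduct.map φ (TensorProduct.map ψ χ) ((TensorProduct.assoc K B B B) t) := by
    intro t
    have h : (TensorProduct.assoc K E E E).toLinearMap ∘ₗ
        TensorProduct.map (TensorProduct.map φ ψ) χ
        = (TensorProduct.map φ (TensorProduct.map ψ χ)) ∘ₗ (TensorProduct.assoc K B B B).toLinearMap := by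
      apply TensorProduct.ext_threefold
      intro x y z
      simp
    exact LinearMap.congr_fun h t
  ext a : 1
  rw [conv_apply, conv_apply, LinearMap.congr_fun e1 (comul a),
      LinearMap.congr_fun e2 (comul a)]
  simp only [LinearMap.coe_comp, Function.comp_apply]
  rw [assocE, nat]
  have h4 := LinearMap.congr_fun hco a
  simp only [LinearMap.coe_comp, Function.comp_apply, LinearEquiv.coe_coe] at h4
  rw [h4]

lemma deltaPrime_apply (x : B) :
    deltaPrime K B comul one x = comul x - x ⊗ₜ[K] one - one ⊗ₜ[K] x := rfl

lemma mapIncl_range_mono {p p' q q' : Submodule K B} (hp : p ≤ p') (hq : q ≤ q') :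
    LinearMap.range (TensorProduct.mapIncl p q) ≤ LinearMap.range (TensorProduct.mapIncl p' q') := by
  have h : TensorProduct.mapIncl p q
      = TensorProduct.mapIncl p' q' ∘ₗ
        TensorProduct.map (Submodule.inclusion hp) (Submodule.inclusion hq) := by
    unfold TensorProduct.mapIncl
    rw [← TensorProduct.map_comp]
    rfl
  rw [h]
  exact LinearMap.range_comp_le_range _ _

lemma one_mem_ordSub_zero : one ∈ ordSub K B comul one 0 := by
  simp [ordSub, Submodule.mem_span_singleton_self]

lemma ordSub_mono_succ (hone : comul one = one ⊗ₜ[K] one) (k : ℕ) :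
    ordSub K B comul one k ≤ ordSub K B comul one (k + 1) := by
  induction k with
  | zero =>
      intro x hx
      rcases Submodule.mem_span_singleton.mp hx with ⟨c, rfl⟩
      simp only [ordSub, Submodule.mem_comap]
      have h : deltaPrime K B comul one (c • one) = (-c) • (one ⊗ₜ[K] one) := by
        rw [map_smul, deltaPrime_apply, hone, neg_smul, ← smul_neg]
        congr 1
        abel
      rw [h]
      apply Submodule.smul_mem
      exact (show one ⊗ₜ[K] one ∈ LinearMap.range (TensorProduct.mapIncl
        (ordSub K B comul one 0) (ordSub K B comul one 0)) from
        ⟨(⟨one, one_mem_ordSub_zero comul one⟩ : ordSub K B comul one 0) ⊗ₜ[K]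
        (⟨one, one_mem_ordSub_zero comul one⟩ : ordSub K B comul one 0), rfl⟩)
  | succ k ih =>
      intro x hx
      simp only [ordSub, Submodule.mem_comap] at hx ⊢
      exact mapIncl_range_mono ih ih hx

lemma ordSub_mono (hone : comul one = one ⊗ₜ[K] one) : Monotone (ordSub K B comul one) :=
  monotone_nat_of_le_succ (ordSub_mono_succ comul one hone)

lemma one_mem_ordSub (hone : comul one = one ⊗ₜ[K] one) (k : ℕ) :
    one ∈ ordSub K B comul one k :=
  ordSub_mono comul one hone (Nat.zero_le k) (one_mem_ordSub_zero comul one)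

/-- `f - u` where `f` is left multiplication. -/
noncomputable def gMap : B →ₗ[K] Module.End K B :=
  TensorProduct.curry mul - convUnit counit

/-- Convolution powers of `gMap`. -/
noncomputable def gpow : ℕ → (B →ₗ[K] Module.End K B)
  | 0 => convUnit counit
  | n + 1 => conv comul (gMap counit mul) (gpow n)

lemma gMap_one (hcounit : counit one = 1) (left_unital : ∀ a : B, mul (one ⊗ₜ[K] a) = a) :
    gMap counit mul one = 0 := by
  ext b
  simp [gMap, convUnit, left_unital, hcounit]

lemma convUnit_one (hcounit : counit one = 1) : convUnit counit one = LinearMap.id := by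
  simp [convUnit, hcounit]

lemma gpow_succ_one (hone : comul one = one ⊗ₜ[K] one) (hg : gMap counit mul one = 0) (n : ℕ) :
    gpow comul counit mul (n + 1) one = 0 := by
  rw [gpow, conv_apply, hone]
  simp [hg]

lemma gpow_vanish (hone : comul one = one ⊗ₜ[K] one) (hg : gMap counit mul one = 0) :
    ∀ k, ∀ x ∈ ordSub K B comul one k, ∀ n, k < n → gpow comul counit mul n x = 0 := by
  intro k
  induction k with
  | zero =>
      intro x hx n hn
      rcases Submodule.mem_span_singleton.mp hx with ⟨c, rfl⟩
      obtain ⟨m, rfl⟩ := Nat.exists_eq_add_of_lt hn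
      rw [map_smul, gpow_succ_one comul counit one mul hone hg, smul_zero]
  | succ k ih =>
      intro x hx n hn
      obtain ⟨m, rfl⟩ : ∃ m, n = m + 1 := ⟨n - 1, by omega⟩
      have hkm : k < m := by omega
      simp only [ordSub, Submodule.mem_comap] at hx
      obtain ⟨t, ht⟩ := hx
      have hΔ : comul x = TensorProduct.mapIncl _ _ t + x ⊗ₜ[K] one + one ⊗ₜ[K] x := by
        rw [ht, deltaPrime_apply]
        abel
      rw [gpow, conv_apply, hΔ]
      simp only [map_add]
      have h1 : TensorProduct.map (gMap counit mul) (gpow comul counit mul m)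
          (TensorProduct.mapIncl (ordSub K B comul one k) (ordSub K B comul one k) t) = 0 := by
        have hz : (gpow comul counit mul m) ∘ₗ (ordSub K B comul one k).subtype = 0 := by
          refine LinearMap.ext fun z => ?_
          simpa using ih z.1 z.2 m hkm
        have hcomp : TensorProduct.map (gMap counit mul) (gpow comul counit mul m) ∘ₗ
            TensorProduct.mapIncl (ordSub K B comul one k) (ordSub K B comul one k)
            = TensorProduct.map ((gMap counit mul) ∘ₗ (ordSub K B comul one k).subtype)
              ((gpow comul counit mul m) ∘ₗ (ordSub K B comul one k).subtype) := by
          unfold TensorProduct.mapIncl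
          rw [← TensorProduct.map_comp]
        rw [← LinearMap.comp_apply, hcomp, hz, TensorProduct.map_zero_right]
        rfl
      rw [h1]
      have h2 : gpow comul counit mul m one = 0 := by
        obtain ⟨p, rfl⟩ : ∃ p, m = p + 1 := ⟨m - 1, by omega⟩
        exact gpow_succ_one comul counit one mul hone hg p
      simp [h2, hg]
/-- Partial sums `∑_{n=0}^{m} (-1)^n g^{⋆n}`. -/
noncomputable def pSum (m : ℕ) : B →ₗ[K] Module.End K B :=
  ∑ n ∈ Finset.range (m + 1), ((-1 : K) ^ n) • gpow comul counit mul n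

lemma pSum_stab (hone : comul one = one ⊗ₜ[K] one) (hg : gMap counit mul one = 0)
    {k : ℕ} {x : B} (hx : x ∈ ordSub K B comul one k) {m : ℕ} (hm : k ≤ m) :
    pSum comul counit mul m x = pSum comul counit mul k x := by
  unfold pSum
  rw [LinearMap.sum_apply, LinearMap.sum_apply]
  symm
  apply Finset.sum_subset
  · exact Finset.range_subset_range.mpr (by omega)
  · intro n hn hn'
    simp only [Finset.mem_range] at hn hn'
    have : k < n := by omega
    simp [gpow_vanish comul counit one mul hone hg k x hx n this]

lemma pSum_one (hone : comul one = one ⊗ₜ[K] one) (hg : gMap counit mul one = 0)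
    (hcounit : counit one = 1) (m : ℕ) :
    pSum comul counit mul m one = LinearMap.id := by
  unfold pSum
  rw [LinearMap.sum_apply]
  rw [Finset.sum_eq_single 0]
  · simp [convUnit_one counit one hcounit, gpow]
  · intro n hn hn0
    obtain ⟨p, rfl⟩ : ∃ p, n = p + 1 := ⟨n - 1, by omega⟩
    simp [gpow_succ_one comul counit one mul hone hg p]
  · simp

/-- The convolution inverse of left multiplication, defined pointwise. -/
noncomputable def hMap (N : B → ℕ) (hN : ∀ x, x ∈ ordSub K B comul one (N x))
    (hone : comul one = one ⊗ₜ[K] one) (hg : gMap counit mul one = 0) :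
    B →ₗ[K] Module.End K B where
  toFun x := pSum comul counit mul (N x) x
  map_add' x y := by
    show pSum comul counit mul (N (x + y)) (x + y)
      = pSum comul counit mul (N x) x + pSum comul counit mul (N y) y
    set m := max (N (x + y)) (max (N x) (N y)) with hm
    have h1 : pSum comul counit mul (N (x+y)) (x+y) = pSum comul counit mul m (x+y) :=
      (pSum_stab comul counit one mul hone hg (hN (x+y)) (by omega)).symm
    have h2 : pSum comul counit mul (N x) x = pSum comul counit mul m x :=
      (pSum_stab comul counit one mul hone hg (hN x) (by omega)).symm
    have h3 : pSum comul counit mul (N y) y = pSum comul counit mul m y :=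
      (pSum_stab comul counit one mul hone hg (hN y) (by omega)).symm
    rw [h1, h2, h3, map_add]
  map_smul' c x := by
    show pSum comul counit mul (N (c • x)) (c • x) = c • pSum comul counit mul (N x) x
    set m := max (N (c • x)) (N x) with hm
    have h1 : pSum comul counit mul (N (c • x)) (c • x) = pSum comul counit mul m (c • x) :=
      (pSum_stab comul counit one mul hone hg (hN (c • x)) (by omega)).symm
    have h2 : pSum comul counit mul (N x) x = pSum comul counit mul m x :=
      (pSum_stab comul counit one mul hone hg (hN x) (by omega)).symm
    rw [h1, h2, map_smul]

lemma hMap_eq (N : B → ℕ) (hN : ∀ x, x ∈ ordSub K B comul one (N x))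
    (hone : comul one = one ⊗ₜ[K] one) (hg : gMap counit mul one = 0)
    {j : ℕ} {x : B} (hx : x ∈ ordSub K B comul one j) {m : ℕ} (hm : j ≤ m) :
    hMap comul counit one mul N hN hone hg x = pSum comul counit mul m x := by
  show pSum comul counit mul (N x) x = pSum comul counit mul m x
  set p := max (N x) m with hp
  rw [← pSum_stab comul counit one mul hone hg (hN x) (show N x ≤ p by omega)]
  rw [pSum_stab comul counit one mul hone hg hx (show j ≤ p by omega),
    ← pSum_stab comul counit one mul hone hg hx hm]
lemma comul_mem_right (hone : comul one = one ⊗ₜ[K] one) {k : ℕ} {x : B}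
    (hx : x ∈ ordSub K B comul one k) :
    comul x ∈ LinearMap.range
      (TensorProduct.map (LinearMap.id : B →ₗ[K] B) (ordSub K B comul one k).subtype) := by
  cases k with
  | zero =>
      rcases Submodule.mem_span_singleton.mp hx with ⟨c, rfl⟩
      refine ⟨c • (one ⊗ₜ[K] (⟨one, one_mem_ordSub_zero comul one⟩ :
        ordSub K B comul one 0)), ?_⟩
      rw [map_smul, map_smul, hone]
      rfl
  | succ k =>
      have hle : ordSub K B comul one k ≤ ordSub K B comul one (k + 1) :=
        ordSub_mono_succ comul one hone k
      obtain ⟨t, ht⟩ := hx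
      have hΔ : comul x = TensorProduct.mapIncl _ _ t + x ⊗ₜ[K] one + one ⊗ₜ[K] x := by
        rw [ht, deltaPrime_apply]
        abel
      rw [hΔ]
      refine Submodule.add_mem _ (Submodule.add_mem _ ?_ ?_) ?_
      · have e : TensorProduct.mapIncl (ordSub K B comul one k) (ordSub K B comul one k)
            = (TensorProduct.map (LinearMap.id : B →ₗ[K] B)
                (ordSub K B comul one (k+1)).subtype) ∘ₗ
              (TensorProduct.map (ordSub K B comul one k).subtype
                (Submodule.inclusion hle)) := by
          unfold TensorProduct.mapIncl
          rw [← TensorProduct.map_comp]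
          rfl
        exact ⟨TensorProduct.map (ordSub K B comul one k).subtype
          (Submodule.inclusion hle) t, by rw [e] at ht ⊢; rfl⟩
      · exact ⟨x ⊗ₜ[K] (⟨one, one_mem_ordSub comul one hone (k+1)⟩ :
          ordSub K B comul one (k+1)), rfl⟩
      · exact ⟨one ⊗ₜ[K] (⟨x, ⟨t, ht⟩⟩ : ordSub K B comul one (k+1)), rfl⟩

lemma comul_mem_left (hone : comul one = one ⊗ₜ[K] one) {k : ℕ} {x : B}
    (hx : x ∈ ordSub K B comul one k) :
    comul x ∈ LinearMap.range
      (TensorProduct.map (ordSub K B comul one k).subtype (LinearMap.id : B →ₗ[K] B)) := by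
  cases k with
  | zero =>
      rcases Submodule.mem_span_singleton.mp hx with ⟨c, rfl⟩
      refine ⟨c • ((⟨one, one_mem_ordSub_zero comul one⟩ :
        ordSub K B comul one 0) ⊗ₜ[K] one), ?_⟩
      rw [map_smul, map_smul, hone]
      rfl
  | succ k =>
      have hle : ordSub K B comul one k ≤ ordSub K B comul one (k + 1) :=
        ordSub_mono_succ comul one hone k
      obtain ⟨t, ht⟩ := hx
      have hΔ : comul x = TensorProduct.mapIncl _ _ t + x ⊗ₜ[K] one + one ⊗ₜ[K] x := by
        rw [ht, deltaPrime_apply]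
        abel
      rw [hΔ]
      refine Submodule.add_mem _ (Submodule.add_mem _ ?_ ?_) ?_
      · have e : TensorProduct.mapIncl (ordSub K B comul one k) (ordSub K B comul one k)
            = (TensorProduct.map (ordSub K B comul one (k+1)).subtype
                (LinearMap.id : B →ₗ[K] B)) ∘ₗ
              (TensorProduct.map (Submodule.inclusion hle)
                (ordSub K B comul one k).subtype) := by
          unfold TensorProduct.mapIncl
          rw [← TensorProduct.map_comp]
          rfl
        exact ⟨TensorProduct.map (Submodule.inclusion hle)
          (ordSub K B comul one k).subtype t, by rw [e] at ht ⊢; rfl⟩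
      · exact ⟨(⟨x, ⟨t, ht⟩⟩ : ordSub K B comul one (k+1)) ⊗ₜ[K] one, rfl⟩
      · exact ⟨(⟨one, one_mem_ordSub comul one hone (k+1)⟩ :
          ordSub K B comul one (k+1)) ⊗ₜ[K] x, rfl⟩

lemma conv_gpow_left (n : ℕ) :
    conv comul (gMap counit mul) (gpow comul counit mul n) = gpow comul counit mul (n + 1) := rfl

lemma conv_gpow_right
    (hco : (TensorProduct.assoc K B B B).toLinearMap ∘ₗ
      (TensorProduct.map comul LinearMap.id) ∘ₗ comul
      = (TensorProduct.map LinearMap.id comul) ∘ₗ comul)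
    (hlid : (TensorProduct.lid K B).toLinearMap ∘ₗ
      (TensorProduct.map counit LinearMap.id) ∘ₗ comul = LinearMap.id)
    (hrid : (TensorProduct.rid K B).toLinearMap ∘ₗ
      (TensorProduct.map LinearMap.id counit) ∘ₗ comul = LinearMap.id)
    (n : ℕ) :
    conv comul (gpow comul counit mul n) (gMap counit mul) = gpow comul counit mul (n + 1) := by
  induction n with
  | zero =>
      show conv comul (convUnit counit) (gMap counit mul) = _
      rw [conv_unit_left comul counit hlid]
      show _ = conv comul (gMap counit mul) (convUnit counit)
      rw [conv_unit_right comul counit hrid]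
  | succ n ih =>
      show conv comul (conv comul (gMap counit mul) (gpow comul counit mul n))
        (gMap counit mul) = _
      rw [conv_assoc comul hco, ih]
      rfl

lemma pSum_succ_eq_sub_conv_right (m : ℕ) :
    pSum comul counit mul (m + 1)
      = convUnit counit - conv comul (gMap counit mul) (pSum comul counit mul m) := by
  unfold pSum
  rw [conv_sum_right]
  rw [Finset.sum_range_succ' (fun n => ((-1 : K) ^ n) • gpow comul counit mul n) (m+1)]
  have e : ∀ n : ℕ, conv comul (gMap counit mul) (((-1 : K) ^ n) • gpow comul counit mul n)
      = -(((-1 : K) ^ (n+1)) • gpow comul counit mul (n+1)) := by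
    intro n
    rw [conv_smul_right, conv_gpow_left]
    ext a b
    simp [pow_succ]
  simp only [e]
  rw [Finset.sum_neg_distrib]
  simp [gpow, add_comm, sub_eq_add_neg]
lemma conv_pSum_gMap_comm
    (hco : (TensorProduct.assoc K B B B).toLinearMap ∘ₗ
      (TensorProduct.map comul LinearMap.id) ∘ₗ comul
      = (TensorProduct.map LinearMap.id comul) ∘ₗ comul)
    (hlid : (TensorProduct.lid K B).toLinearMap ∘ₗ
      (TensorProduct.map counit LinearMap.id) ∘ₗ comul = LinearMap.id)
    (hrid : (TensorProduct.rid K B).toLinearMap ∘ₗ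
      (TensorProduct.map LinearMap.id counit) ∘ₗ comul = LinearMap.id)
    (m : ℕ) :
    conv comul (pSum comul counit mul m) (gMap counit mul)
      = conv comul (gMap counit mul) (pSum comul counit mul m) := by
  unfold pSum
  rw [conv_sum_left, conv_sum_right]
  refine Finset.sum_congr rfl fun n _ => ?_
  rw [conv_smul_left, conv_smul_right, conv_gpow_left,
    conv_gpow_right comul counit mul hco hlid hrid]

lemma conv_gMap_hMap (N : B → ℕ) (hN : ∀ x, x ∈ ordSub K B comul one (N x))
    (hone : comul one = one ⊗ₜ[K] one) (hg : gMap counit mul one = 0) (a : B) :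
    conv comul (gMap counit mul) (hMap comul counit one mul N hN hone hg) a
      = convUnit counit a - hMap comul counit one mul N hN hone hg a := by
  set h := hMap comul counit one mul N hN hone hg with hdef
  set k := N a with hk
  obtain ⟨w, hw⟩ := comul_mem_right comul one hone (hN a)
  have hsub : h ∘ₗ (ordSub K B comul one k).subtype
      = pSum comul counit mul k ∘ₗ (ordSub K B comul one k).subtype := by
    refine LinearMap.ext fun z => ?_
    simpa using hMap_eq comul counit one mul N hN hone hg z.2 (le_refl k)
  have e : TensorProduct.map (gMap counit mul) h (comul a)
      = TensorProduct.map (gMap counit mul) (pSum comul counit mul k) (comul a) := by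
    rw [← hw]
    have e2 : TensorProduct.map (gMap counit mul) h ∘ₗ
        TensorProduct.map (LinearMap.id : B →ₗ[K] B) (ordSub K B comul one k).subtype
        = TensorProduct.map (gMap counit mul) (pSum comul counit mul k) ∘ₗ
          TensorProduct.map (LinearMap.id : B →ₗ[K] B) (ordSub K B comul one k).subtype := by
      rw [← TensorProduct.map_comp, ← TensorProduct.map_comp, hsub]
    exact LinearMap.congr_fun e2 w
  have e3 : conv comul (gMap counit mul) h a
      = conv comul (gMap counit mul) (pSum comul counit mul k) a := by
    rw [conv_apply, conv_apply, e]
  rw [e3]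
  have e4 : conv comul (gMap counit mul) (pSum comul counit mul k)
      = convUnit counit - pSum comul counit mul (k + 1) := by
    rw [pSum_succ_eq_sub_conv_right]
    abel
  rw [e4]
  have e5 : h a = pSum comul counit mul (k+1) a :=
    hMap_eq comul counit one mul N hN hone hg (hN a) (by omega)
  rw [LinearMap.sub_apply, e5]

lemma conv_hMap_gMap (N : B → ℕ) (hN : ∀ x, x ∈ ordSub K B comul one (N x))
    (hone : comul one = one ⊗ₜ[K] one) (hg : gMap counit mul one = 0)
    (hco : (TensorProduct.assoc K B B B).toLinearMap ∘ₗ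
      (TensorProduct.map comul LinearMap.id) ∘ₗ comul
      = (TensorProduct.map LinearMap.id comul) ∘ₗ comul)
    (hlid : (TensorProduct.lid K B).toLinearMap ∘ₗ
      (TensorProduct.map counit LinearMap.id) ∘ₗ comul = LinearMap.id)
    (hrid : (TensorProduct.rid K B).toLinearMap ∘ₗ
      (TensorProduct.map LinearMap.id counit) ∘ₗ comul = LinearMap.id)
    (a : B) :
    conv comul (hMap comul counit one mul N hN hone hg) (gMap counit mul) a
      = convUnit counit a - hMap comul counit one mul N hN hone hg a := by
  set h := hMap comul counit one mul N hN hone hg with hdef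
  set k := N a with hk
  obtain ⟨w, hw⟩ := comul_mem_left comul one hone (hN a)
  have hsub : h ∘ₗ (ordSub K B comul one k).subtype
      = pSum comul counit mul k ∘ₗ (ordSub K B comul one k).subtype := by
    refine LinearMap.ext fun z => ?_
    simpa using hMap_eq comul counit one mul N hN hone hg z.2 (le_refl k)
  have e : TensorProduct.map h (gMap counit mul) (comul a)
      = TensorProduct.map (pSum comul counit mul k) (gMap counit mul) (comul a) := by
    rw [← hw]
    have e2 : TensorProduct.map h (gMap counit mul) ∘ₗ
        TensorProduct.map (ordSub K B comul one k).subtype (LinearMap.id : B →ₗ[K] B)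
        = TensorProduct.map (pSum comul counit mul k) (gMap counit mul) ∘ₗ
          TensorProduct.map (ordSub K B comul one k).subtype (LinearMap.id : B →ₗ[K] B) := by
      rw [← TensorProduct.map_comp, ← TensorProduct.map_comp, hsub]
    exact LinearMap.congr_fun e2 w
  have e3 : conv comul h (gMap counit mul) a
      = conv comul (pSum comul counit mul k) (gMap counit mul) a := by
    rw [conv_apply, conv_apply, e]
  rw [e3]
  have e4 : conv comul (pSum comul counit mul k) (gMap counit mul)
      = convUnit counit - pSum comul counit mul (k + 1) := by
    rw [conv_pSum_gMap_comm comul counit mul hco hlid hrid, pSum_succ_eq_sub_conv_right]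
    abel
  rw [e4]
  have e5 : h a = pSum comul counit mul (k+1) a :=
    hMap_eq comul counit one mul N hN hone hg (hN a) (by omega)
  rw [LinearMap.sub_apply, e5]
lemma lift_conv_eq (φ ψ : B →ₗ[K] Module.End K B) :
    TensorProduct.lift φ ∘ₗ TensorProduct.map LinearMap.id (TensorProduct.lift ψ) ∘ₗ
      (TensorProduct.assoc K B B B).toLinearMap ∘ₗ TensorProduct.map comul LinearMap.id
    = TensorProduct.lift (conv comul φ ψ) := by
  apply TensorProduct.ext'
  intro a b
  have key : ∀ t : B ⊗[K] B,
      TensorProduct.lift φ (TensorProduct.map LinearMap.id (TensorProduct.lift ψ)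
        ((TensorProduct.assoc K B B B) (t ⊗ₜ[K] b)))
      = (LinearMap.mul' K (Module.End K B) (TensorProduct.map φ ψ t)) b := by
    intro t
    induction t using TensorProduct.induction_on with
    | zero => simp
    | tmul x y => simp [LinearMap.mul'_apply, Module.End.mul_eq_comp]
    | add s t hs ht =>
        rw [map_add]
        simp only [add_tmul, map_add, LinearMap.add_apply, hs, ht]
  simp only [LinearMap.coe_comp, Function.comp_apply, LinearEquiv.coe_coe,
    TensorProduct.map_tmul, LinearMap.id_coe, id_eq, TensorProduct.lift.tmul]
  rw [key (comul a)]
  rfl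

lemma lift_convUnit :
    TensorProduct.lift (convUnit counit)
      = (TensorProduct.lid K B).toLinearMap ∘ₗ TensorProduct.map counit LinearMap.id := by
  apply TensorProduct.ext'
  intro a b
  simp [convUnit]

lemma lift_curry_eq : TensorProduct.lift (TensorProduct.curry mul) = mul :=
  TensorProduct.ext' fun _ _ => rfl
end Aux
/-- Let `(B, Δ, ε, 1, μ)` be a nonassociative C³I-bialgebra over `K` which
is left-unital, i.e. `μ(1 ⊗ a) = a` for all `a ∈ B`, and whose underlying C³-coalgebra is
connected (every element lies in some subcoalgebra of finite order).  Then `B` is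
left-regular: there exists a `K`-linear map `μ' : B ⊗ B → B` with
`Σ μ(a⁽¹⁾ ⊗ μ'(a⁽²⁾ ⊗ b)) = ε(a) b = Σ μ'(a⁽¹⁾ ⊗ μ(a⁽²⁾ ⊗ b))` for all `a, b ∈ B`. -/
theorem connected_left_unital_is_left_regular
    (K : Type*) [CommRing K] [Algebra ℚ K]
    (B : Type*) [AddCommGroup B] [Module K B]
    (comul : B →ₗ[K] B ⊗[K] B) (counit : B →ₗ[K] K) (one : B) (mul : B ⊗[K] B →ₗ[K] B)
    (hB : IsC3IBialgebra K B comul counit one mul)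
    (left_unital : ∀ a : B, mul (one ⊗ₜ[K] a) = a)
    (connected : ∀ x : B, ∃ k : ℕ, x ∈ ordSub K B comul one k) :
    ∃ mul' : B ⊗[K] B →ₗ[K] B, LeftRegularWitness K B comul counit mul mul' := by
  have hone := hB.isC3.comul_one
  have hcounit := hB.isC3.counit_one
  have hco := hB.isC3.coassoc
  have hlid := hB.isC3.counit_comul
  have hrid := hB.isC3.comul_counit
  have hg : gMap counit mul one = 0 := gMap_one counit one mul hcounit left_unital
  set N : B → ℕ := fun x => (connected x).choose with hNdef
  have hN : ∀ x, x ∈ ordSub K B comul one (N x) := fun x => (connected x).choose_spec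
  set h := hMap comul counit one mul N hN hone hg with hdef
  have hfg : TensorProduct.curry mul = gMap counit mul + convUnit counit := by
    rw [gMap]; abel
  have conv1 : conv comul (TensorProduct.curry mul) h = convUnit counit := by
    rw [hfg, conv_add_left]
    ext a : 1
    rw [LinearMap.add_apply, conv_gMap_hMap comul counit one mul N hN hone hg a,
      conv_unit_left comul counit hlid]
    abel
  have conv2 : conv comul h (TensorProduct.curry mul) = convUnit counit := by
    rw [hfg, conv_add_right]
    ext a : 1
    rw [LinearMap.add_apply,
      conv_hMap_gMap comul counit one mul N hN hone hg hco hlid hrid a,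
      conv_unit_right comul counit hrid]
    abel
  refine ⟨TensorProduct.lift h, ?_, ?_⟩
  · calc mul ∘ₗ TensorProduct.map LinearMap.id (TensorProduct.lift h) ∘ₗ
        (TensorProduct.assoc K B B B).toLinearMap ∘ₗ TensorProduct.map comul LinearMap.id
        = TensorProduct.lift (TensorProduct.curry mul) ∘ₗ
            TensorProduct.map LinearMap.id (TensorProduct.lift h) ∘ₗ
            (TensorProduct.assoc K B B B).toLinearMap ∘ₗ
            TensorProduct.map comul LinearMap.id := by rw [lift_curry_eq]
      _ = TensorProduct.lift (conv comul (TensorProduct.curry mul) h) :=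
            lift_conv_eq comul (TensorProduct.curry mul) h
      _ = TensorProduct.lift (convUnit counit) := by rw [conv1]
      _ = (TensorProduct.lid K B).toLinearMap ∘ₗ TensorProduct.map counit LinearMap.id :=
            lift_convUnit counit
  · calc TensorProduct.lift h ∘ₗ TensorProduct.map LinearMap.id mul ∘ₗ
        (TensorProduct.assoc K B B B).toLinearMap ∘ₗ TensorProduct.map comul LinearMap.id
        = TensorProduct.lift h ∘ₗ
            TensorProduct.map LinearMap.id (TensorProduct.lift (TensorProduct.curry mul)) ∘ₗ
            (TensorProduct.assoc K B B B).toLinearMap ∘ₗ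
            TensorProduct.map comul LinearMap.id := by rw [lift_curry_eq]
      _ = TensorProduct.lift (conv comul h (TensorProduct.curry mul)) :=
            lift_conv_eq comul h (TensorProduct.curry mul)
      _ = TensorProduct.lift (convUnit counit) := by rw [conv2]
      _ = (TensorProduct.lid K B).toLinearMap ∘ₗ TensorProduct.map counit LinearMap.id :=
            lift_convUnit counit

end RackPaper
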